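/- Let A be a real symmetric m×m matrix with A ⪰ λ I_m for some λ > 0, let B ∈ ℝ^m, d ∈ (0,1), and let n be a positive integer. Let Ω_A be a random real symmetric m×m matrix and Ω_B a random vector in ℝ^m (measurable, on a common probability space) such that almost surely ‖Ω_A‖ ≤ d λ (spectral norm), and such that E[‖Ω_A‖_F²] ≤ n m² σ_γ² and E[‖Ω_B‖²] ≤ n m σ_η² for constants σ_γ, σ_η ≥ 0. Define x* = −A^{-1}B and the random vector x(∞) = −(A+Ω_A)^{-1}(B+Ω_B). Then E[ ‖x(∞) − x*‖² ] ≤ ( 2 n m² σ_γ² ‖x*‖² + 2 n m σ_η² ) / ( (1−d)² λ² ). -/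

import Mathlib

open Matrix Finset MeasureTheory

lemma cs_dot {m : ℕ} (x y : Fin m → ℝ) :
    x ⬝ᵥ y ≤ Real.sqrt (∑ k, (x k) ^ 2) * Real.sqrt (∑ k, (y k) ^ 2) := by
  have h := Finset.sum_mul_sq_le_sq_mul_sq Finset.univ x y
  calc x ⬝ᵥ y ≤ |∑ k, x k * y k| := le_abs_self _
    _ = Real.sqrt ((∑ k, x k * y k) ^ 2) := (Real.sqrt_sq_eq_abs _).symm
    _ ≤ Real.sqrt ((∑ k, (x k) ^ 2) * ∑ k, (y k) ^ 2) := Real.sqrt_le_sqrt h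
    _ = _ := Real.sqrt_mul (Finset.sum_nonneg fun k _ => sq_nonneg _) _

lemma posdef_of_quad {m : ℕ} (M : Matrix (Fin m) (Fin m) ℝ) (hsym : M.IsSymm)
    {c : ℝ} (hc : 0 < c)
    (hq : ∀ x : Fin m → ℝ, c * ∑ k, (x k) ^ 2 ≤ x ⬝ᵥ M.mulVec x) : M.PosDef := by
  refine Matrix.posDef_iff_dotProduct_mulVec.2 ⟨?_, fun x hx => ?_⟩
  · rw [Matrix.IsHermitian, Matrix.conjTranspose_eq_transpose_of_trivial]; exact hsym
  · have hS : 0 < ∑ k, (x k) ^ 2 := by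
      rcases Function.ne_iff.1 hx with ⟨k, hk⟩
      exact Finset.sum_pos' (fun i _ => sq_nonneg _)
        ⟨k, Finset.mem_univ k, by simpa using sq_pos_of_ne_zero hk⟩
    have := lt_of_lt_of_le (mul_pos hc hS) (hq x)
    simpa using this

lemma mulVec_inv_cancel {m : ℕ} {M : Matrix (Fin m) (Fin m) ℝ} (h : IsUnit M.det)
    (v : Fin m → ℝ) : M *ᵥ (M⁻¹ *ᵥ v) = v := by
  rw [Matrix.mulVec_mulVec, Matrix.mul_nonsing_inv _ h, Matrix.one_mulVec]

lemma pointwise_bound {m : ℕ} (A ΩA' : Matrix (Fin m) (Fin m) ℝ)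
    (hAsym : A.IsSymm) (hΩsym : ΩA'.IsSymm) (B ΩB' : Fin m → ℝ)
    (lam d : ℝ) (hlam : 0 < lam) (hd : d ∈ Set.Ioo (0 : ℝ) 1)
    (hApd : ∀ x : Fin m → ℝ, lam * ∑ k, (x k) ^ 2 ≤ x ⬝ᵥ A.mulVec x)
    (hnorm : ∀ x : Fin m → ℝ,
      Real.sqrt (∑ k, (ΩA'.mulVec x k) ^ 2) ≤ d * lam * Real.sqrt (∑ k, (x k) ^ 2)) :
    ∑ k, ((-((A + ΩA')⁻¹ *ᵥ (B + ΩB'))) k - (-(A⁻¹ *ᵥ B)) k) ^ 2 ≤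
      (2 * (∑ p, ∑ q, (ΩA' p q) ^ 2) * (∑ k, ((-(A⁻¹ *ᵥ B)) k) ^ 2)
        + 2 * ∑ k, (ΩB' k) ^ 2) / ((1 - d) ^ 2 * lam ^ 2) := by
  obtain ⟨hd0, hd1⟩ := hd
  set c : ℝ := (1 - d) * lam with hc_def
  have hc : 0 < c := mul_pos (by linarith) hlam
  set M : Matrix (Fin m) (Fin m) ℝ := A + ΩA' with hM_def
  -- quadratic lower bound for M
  have hq : ∀ x : Fin m → ℝ, c * ∑ k, (x k) ^ 2 ≤ x ⬝ᵥ M.mulVec x := by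
    intro x
    have hSx : (0:ℝ) ≤ ∑ k, (x k) ^ 2 := Finset.sum_nonneg fun k _ => sq_nonneg _
    have h1 : -(x ⬝ᵥ ΩA'.mulVec x) ≤ d * lam * ∑ k, (x k) ^ 2 := by
      have := cs_dot (-x) (ΩA'.mulVec x)
      have hneg : (-x) ⬝ᵥ ΩA'.mulVec x = -(x ⬝ᵥ ΩA'.mulVec x) := by
        simp [neg_dotProduct]
      have hSneg : ∑ k, ((-x) k) ^ 2 = ∑ k, (x k) ^ 2 := by simp
      rw [hneg, hSneg] at this
      calc -(x ⬝ᵥ ΩA'.mulVec x)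
          ≤ Real.sqrt (∑ k, (x k) ^ 2) * Real.sqrt (∑ k, (ΩA'.mulVec x k) ^ 2) := this
        _ ≤ Real.sqrt (∑ k, (x k) ^ 2) * (d * lam * Real.sqrt (∑ k, (x k) ^ 2)) := by
            exact mul_le_mul_of_nonneg_left (hnorm x) (Real.sqrt_nonneg _)
        _ = d * lam * (Real.sqrt (∑ k, (x k) ^ 2) * Real.sqrt (∑ k, (x k) ^ 2)) := by ring
        _ = d * lam * ∑ k, (x k) ^ 2 := by rw [Real.mul_self_sqrt hSx]
    have h2 := hApd x
    have hsplit : x ⬝ᵥ M.mulVec x = x ⬝ᵥ A.mulVec x + x ⬝ᵥ ΩA'.mulVec x := by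
      rw [hM_def, Matrix.add_mulVec, dotProduct_add]
    rw [hsplit, hc_def]; nlinarith [hSx]
  have hMdet : IsUnit M.det :=
    ((posdef_of_quad M (hAsym.add hΩsym) hc hq).det_pos).ne'.isUnit
  have hAdet : IsUnit A.det :=
    ((posdef_of_quad A hAsym hlam hApd).det_pos).ne'.isUnit
  set xstar : Fin m → ℝ := -(A⁻¹ *ᵥ B) with hxs
  set xinf : Fin m → ℝ := -((A + ΩA')⁻¹ *ᵥ (B + ΩB')) with hxi
  have hAx : A *ᵥ xstar = -B := by
    rw [hxs, Matrix.mulVec_neg, mulVec_inv_cancel hAdet]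
  have hMx : M *ᵥ xinf = -(B + ΩB') := by
    rw [hxi, ← hM_def, Matrix.mulVec_neg, mulVec_inv_cancel hMdet]
  set e : Fin m → ℝ := xinf - xstar with he
  set w : Fin m → ℝ := ΩB' + ΩA' *ᵥ xstar with hw
  have hMe : M *ᵥ e = -w := by
    rw [he, Matrix.mulVec_sub, hMx, hM_def, Matrix.add_mulVec, hAx, hw]
    abel
  set Se : ℝ := ∑ k, (e k) ^ 2 with hSe
  set Sw : ℝ := ∑ k, (w k) ^ 2 with hSw
  have hSe0 : 0 ≤ Se := Finset.sum_nonneg fun k _ => sq_nonneg _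
  have hSw0 : 0 ≤ Sw := Finset.sum_nonneg fun k _ => sq_nonneg _
  have hkey : c * Se ≤ Real.sqrt Se * Real.sqrt Sw := by
    have := hq e
    rw [hMe] at this
    have h2 : e ⬝ᵥ (-w) ≤ Real.sqrt Se * Real.sqrt Sw := by
      have := cs_dot e (-w)
      simpa [hSe, hSw] using this
    exact le_trans this h2
  have hmain : Se ≤ Sw / c ^ 2 := by
    rcases eq_or_lt_of_le hSe0 with h0 | h0
    · rw [← h0]; positivity
    · have hs : 0 < Real.sqrt Se := Real.sqrt_pos.2 h0
      have hsq : Real.sqrt Se * Real.sqrt Se = Se := Real.mul_self_sqrt hSe0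
      have h1 : c * Real.sqrt Se ≤ Real.sqrt Sw := by
        have h2 : (c * Real.sqrt Se) * Real.sqrt Se ≤ Real.sqrt Sw * Real.sqrt Se := by
          calc (c * Real.sqrt Se) * Real.sqrt Se = c * Se := by rw [mul_assoc, hsq]
            _ ≤ Real.sqrt Se * Real.sqrt Sw := hkey
            _ = Real.sqrt Sw * Real.sqrt Se := mul_comm _ _
        exact le_of_mul_le_mul_right h2 hs
      have h3 : c ^ 2 * Se ≤ Sw := by
        have h4 := mul_le_mul h1 h1 (by positivity) (Real.sqrt_nonneg _)
        have h5 : Real.sqrt Sw * Real.sqrt Sw = Sw := Real.mul_self_sqrt hSw0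
        nlinarith [hsq]
      rw [le_div_iff₀ (by positivity)]
      linarith
  -- bound Sw
  set F : ℝ := ∑ p, ∑ q, (ΩA' p q) ^ 2 with hF
  set G : ℝ := ∑ k, (ΩB' k) ^ 2 with hG
  set Sx : ℝ := ∑ k, (xstar k) ^ 2 with hSx
  have hSx0 : 0 ≤ Sx := Finset.sum_nonneg fun k _ => sq_nonneg _
  have hrow : ∑ k, ((ΩA' *ᵥ xstar) k) ^ 2 ≤ F * Sx := by
    rw [hF, Finset.sum_mul]
    refine Finset.sum_le_sum fun k _ => ?_
    have := Finset.sum_mul_sq_le_sq_mul_sq Finset.univ (fun q => ΩA' k q) xstar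
    simpa [Matrix.mulVec, dotProduct, hSx] using this
  have hWb : Sw ≤ 2 * F * Sx + 2 * G := by
    have h6 : Sw ≤ ∑ k, (2 * ((ΩA' *ᵥ xstar) k) ^ 2 + 2 * (ΩB' k) ^ 2) := by
      rw [hSw]
      refine Finset.sum_le_sum fun k _ => ?_
      rw [hw]
      have := sq_nonneg ((ΩA' *ᵥ xstar) k - ΩB' k)
      simp only [Pi.add_apply]
      nlinarith
    have h7 : ∑ k, (2 * ((ΩA' *ᵥ xstar) k) ^ 2 + 2 * (ΩB' k) ^ 2)
        = 2 * (∑ k, ((ΩA' *ᵥ xstar) k) ^ 2) + 2 * G := by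
      rw [Finset.sum_add_distrib, ← Finset.mul_sum, ← Finset.mul_sum, hG]
    nlinarith [hrow]
  have hfin : Se ≤ (2 * F * Sx + 2 * G) / ((1 - d) ^ 2 * lam ^ 2) := by
    have hc2 : c ^ 2 = (1 - d) ^ 2 * lam ^ 2 := by rw [hc_def]; ring
    calc Se ≤ Sw / c ^ 2 := hmain
      _ ≤ (2 * F * Sx + 2 * G) / c ^ 2 := by
          exact div_le_div_of_nonneg_right hWb (by positivity) |>.trans_eq rfl
      _ = (2 * F * Sx + 2 * G) / ((1 - d) ^ 2 * lam ^ 2) := by rw [hc2]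
  have hgoal : ∑ k, (xinf k - xstar k) ^ 2 = Se := by
    rw [hSe]; exact Finset.sum_congr rfl fun k _ => by rw [he]; simp
  calc ∑ k, (xinf k - xstar k) ^ 2 = Se := hgoal
    _ ≤ (2 * F * Sx + 2 * G) / ((1 - d) ^ 2 * lam ^ 2) := hfin


/-- Let `A` be a real symmetric `m×m` matrix with `A ⪰ λ Iₘ` for some
`λ > 0` (i.e. `xᵀ A x ≥ λ‖x‖²` for all `x`, with `‖x‖² = ∑ k, (x k)²` the squared
Euclidean norm), `B ∈ ℝ^m`, `d ∈ (0,1)`, `n ≥ 1`. Let `Ω_A` be a random symmetric matrix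
and `Ω_B` a random vector (measurable, on a common probability space) such that almost
surely the spectral norm satisfies `‖Ω_A‖ ≤ dλ` (expressed by the operator property
`‖Ω_A x‖ ≤ dλ‖x‖` for all `x`), and such that `E[‖Ω_A‖_F²] ≤ n m² σ_γ²` and
`E[‖Ω_B‖²] ≤ n m σ_η²` (expectations taken as Lebesgue integrals of the nonnegative
integrands). Then with `x* = -A⁻¹B` and `x(∞) = -(A+Ω_A)⁻¹(B+Ω_B)`,
`E[‖x(∞) - x*‖²] ≤ (2 n m² σ_γ² ‖x*‖² + 2 n m σ_η²) / ((1-d)² λ²)`. -/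
theorem stmt4 (m n : ℕ) (hm : 0 < m) (hn : 0 < n)
    (A : Matrix (Fin m) (Fin m) ℝ) (hAsym : A.IsSymm) (B : Fin m → ℝ)
    (lam d : ℝ) (hlam : 0 < lam) (hd : d ∈ Set.Ioo (0 : ℝ) 1)
    (hApd : ∀ x : Fin m → ℝ, lam * ∑ k, (x k) ^ 2 ≤ x ⬝ᵥ A.mulVec x)
    {Ω : Type*} [MeasurableSpace Ω] (P : Measure Ω) [IsProbabilityMeasure P]
    (ΩA : Ω → Matrix (Fin m) (Fin m) ℝ) (ΩB : Ω → Fin m → ℝ)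
    (hΩAmeas : Measurable (fun ω => Matrix.of.symm (ΩA ω))) (hΩBmeas : Measurable ΩB)
    (hΩAsym : ∀ ω, (ΩA ω).IsSymm)
    (hΩAnorm : ∀ᵐ ω ∂P, ∀ x : Fin m → ℝ,
      Real.sqrt (∑ k, ((ΩA ω).mulVec x k) ^ 2) ≤ d * lam * Real.sqrt (∑ k, (x k) ^ 2))
    (σγ ση : ℝ) (hσγ : 0 ≤ σγ) (hση : 0 ≤ ση)
    (hEA : ∫⁻ ω, ENNReal.ofReal (∑ p, ∑ q, (ΩA ω p q) ^ 2) ∂P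
      ≤ ENNReal.ofReal ((n : ℝ) * (m : ℝ) ^ 2 * σγ ^ 2))
    (hEB : ∫⁻ ω, ENNReal.ofReal (∑ k, (ΩB ω k) ^ 2) ∂P
      ≤ ENNReal.ofReal ((n : ℝ) * (m : ℝ) * ση ^ 2)) :
    let xstar : Fin m → ℝ := -(A⁻¹.mulVec B)
    let xinf : Ω → Fin m → ℝ := fun ω => -((A + ΩA ω)⁻¹.mulVec (B + ΩB ω))
    ∫⁻ ω, ENNReal.ofReal (∑ k, (xinf ω k - xstar k) ^ 2) ∂P
      ≤ ENNReal.ofReal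
          ((2 * (n : ℝ) * (m : ℝ) ^ 2 * σγ ^ 2 * (∑ k, (xstar k) ^ 2)
              + 2 * (n : ℝ) * (m : ℝ) * ση ^ 2) / ((1 - d) ^ 2 * lam ^ 2)) := by
  intro xstar xinf
  obtain ⟨hd0, hd1⟩ := hd
  have hc2 : (0:ℝ) < (1 - d) ^ 2 * lam ^ 2 := by
    have : (0:ℝ) < 1 - d := by linarith
    positivity
  set c2 : ℝ := (1 - d) ^ 2 * lam ^ 2 with hc2def
  set Sx : ℝ := ∑ k, (xstar k) ^ 2 with hSxdef
  have hSx0 : 0 ≤ Sx := Finset.sum_nonneg fun k _ => sq_nonneg _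
  set F : Ω → ℝ := fun ω => ∑ p, ∑ q, (ΩA ω p q) ^ 2 with hFdef
  set G : Ω → ℝ := fun ω => ∑ k, (ΩB ω k) ^ 2 with hGdef
  have hF0 : ∀ ω, 0 ≤ F ω := fun ω =>
    Finset.sum_nonneg fun p _ => Finset.sum_nonneg fun q _ => sq_nonneg _
  have hG0 : ∀ ω, 0 ≤ G ω := fun ω => Finset.sum_nonneg fun k _ => sq_nonneg _
  have hFmeas : Measurable F := by
    refine Finset.measurable_sum _ fun p _ => Finset.measurable_sum _ fun q _ => ?_
    have h : Measurable fun ω => ΩA ω p q :=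
      (measurable_pi_apply q).comp ((measurable_pi_apply p).comp hΩAmeas)
    exact h.pow_const 2
  have hGmeas : Measurable G := by
    refine Finset.measurable_sum _ fun k _ => ?_
    exact ((measurable_pi_apply k).comp hΩBmeas).pow_const 2
  have hae : ∀ᵐ ω ∂P, ENNReal.ofReal (∑ k, (xinf ω k - xstar k) ^ 2)
      ≤ ENNReal.ofReal ((1 / c2) * (2 * Sx * F ω + 2 * G ω)) := by
    filter_upwards [hΩAnorm] with ω hω
    refine ENNReal.ofReal_le_ofReal ?_
    have h := pointwise_bound A (ΩA ω) hAsym (hΩAsym ω) B (ΩB ω) lam d hlam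
      ⟨hd0, hd1⟩ hApd hω
    have heq : (1 / c2) * (2 * Sx * F ω + 2 * G ω)
        = (2 * F ω * Sx + 2 * G ω) / c2 := by ring
    rw [heq]
    exact h
  have hmF : Measurable fun ω => ENNReal.ofReal (2 * Sx) * ENNReal.ofReal (F ω) :=
    (hFmeas.ennreal_ofReal).const_mul _
  have hmG : Measurable fun ω => ENNReal.ofReal 2 * ENNReal.ofReal (G ω) :=
    (hGmeas.ennreal_ofReal).const_mul _
  calc ∫⁻ ω, ENNReal.ofReal (∑ k, (xinf ω k - xstar k) ^ 2) ∂P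
      ≤ ∫⁻ ω, ENNReal.ofReal ((1 / c2) * (2 * Sx * F ω + 2 * G ω)) ∂P :=
        lintegral_mono_ae hae
    _ = ∫⁻ ω, ENNReal.ofReal (1 / c2) *
          (ENNReal.ofReal (2 * Sx) * ENNReal.ofReal (F ω)
            + ENNReal.ofReal 2 * ENNReal.ofReal (G ω)) ∂P := by
        refine lintegral_congr fun ω => ?_
        rw [ENNReal.ofReal_mul (by positivity),
          ENNReal.ofReal_add (by nlinarith [hF0 ω]) (by nlinarith [hG0 ω]),
          ENNReal.ofReal_mul (by positivity : (0:ℝ) ≤ 2 * Sx),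
          ENNReal.ofReal_mul (q := G ω) (by norm_num : (0:ℝ) ≤ 2)]
    _ = ENNReal.ofReal (1 / c2) *
          (ENNReal.ofReal (2 * Sx) * (∫⁻ ω, ENNReal.ofReal (F ω) ∂P)
            + ENNReal.ofReal 2 * (∫⁻ ω, ENNReal.ofReal (G ω) ∂P)) := by
        rw [lintegral_const_mul _ (show Measurable fun ω => ENNReal.ofReal (2 * Sx) * ENNReal.ofReal (F ω)
            + ENNReal.ofReal 2 * ENNReal.ofReal (G ω) from hmF.add hmG), lintegral_add_left hmF,
          lintegral_const_mul _ (hFmeas.ennreal_ofReal),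
          lintegral_const_mul _ (hGmeas.ennreal_ofReal)]
    _ ≤ ENNReal.ofReal (1 / c2) *
          (ENNReal.ofReal (2 * Sx) * ENNReal.ofReal ((n : ℝ) * (m : ℝ) ^ 2 * σγ ^ 2)
            + ENNReal.ofReal 2 * ENNReal.ofReal ((n : ℝ) * (m : ℝ) * ση ^ 2)) := by
        gcongr
    _ = ENNReal.ofReal
          ((2 * (n : ℝ) * (m : ℝ) ^ 2 * σγ ^ 2 * Sx
              + 2 * (n : ℝ) * (m : ℝ) * ση ^ 2) / c2) := by
        rw [← ENNReal.ofReal_mul (by positivity), ← ENNReal.ofReal_mul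
          (by norm_num : (0:ℝ) ≤ 2), ← ENNReal.ofReal_add (by positivity)
          (by positivity), ← ENNReal.ofReal_mul (by positivity)]
        congr 1
        ring
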